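/- Let m ≥ 2 be an integer and k a nonnegative integer. Then there exist strictly positive real numbers c(k,m,j), j = 0,1,…,⌊k/2⌋, such that t^k = Σ_{j=0}^{⌊k/2⌋} c(k,m,j) P_{k-2j}^m(t) for all t in [-1,1]. -/

import Mathlib

open scoped RealInnerProductSpace BigOperators

/-- Gegenbauer polynomial `P_k^m` of degree `k` with parameter `(m-1)/2`,
defined by the standard three-term recurrence. -/
noncomputable def Geg (m : ℕ) : ℕ → ℝ → ℝ
  | 0 => fun _ => 1
  | 1 => fun t => ((m : ℝ) - 1) * t
  | n + 2 => fun t =>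
      ((2 * (n : ℝ) + m + 1) * t * Geg m (n + 1) t
        - ((n : ℝ) + m - 1) * Geg m n t) / ((n : ℝ) + 2)

noncomputable def gup (m N : ℕ) : ℝ := ((N : ℝ) + 1) / (2 * N + m - 1)
noncomputable def gdn (m N : ℕ) : ℝ := ((N : ℝ) + m - 2) / (2 * N + m - 1)

lemma gden_pos (m N : ℕ) (hm : 2 ≤ m) : (0 : ℝ) < 2 * N + m - 1 := by
  have h1 : (2 : ℝ) ≤ m := by exact_mod_cast hm
  have h2 : (0 : ℝ) ≤ N := Nat.cast_nonneg N
  linarith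

lemma gup_pos (m N : ℕ) (hm : 2 ≤ m) : 0 < gup m N := by
  have h2 : (0 : ℝ) ≤ N := Nat.cast_nonneg N
  exact div_pos (by linarith) (gden_pos m N hm)

lemma gdn_pos (m N : ℕ) (hm : 2 ≤ m) (hN : 1 ≤ N) : 0 < gdn m N := by
  have h1 : (2 : ℝ) ≤ m := by exact_mod_cast hm
  have h2 : (1 : ℝ) ≤ N := by exact_mod_cast hN
  exact div_pos (by linarith) (gden_pos m N hm)

lemma key_alg (nr mr t x y : ℝ) (h1 : nr + 2 ≠ 0) (h2 : 2 * nr + mr + 1 ≠ 0) :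
    t * x = ((nr + 1 + 1) / (2 * (nr + 1) + mr - 1))
        * (((2 * nr + mr + 1) * t * x - (nr + mr - 1) * y) / (nr + 2))
      + ((nr + 1 + mr - 2) / (2 * (nr + 1) + mr - 1)) * y := by
  have h3 : 2 * (nr + 1) + mr - 1 ≠ 0 := by
    intro h; apply h2; linarith
  rw [div_mul_div_comm, div_mul_eq_mul_div, div_add_div _ _ (mul_ne_zero h3 h1) h3, eq_div_iff (mul_ne_zero (mul_ne_zero h3 h1) h3)]
  ring

lemma geg_mul (m n : ℕ) (hm : 2 ≤ m) (t : ℝ) :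
    t * Geg m (n + 1) t = gup m (n + 1) * Geg m (n + 2) t + gdn m (n + 1) * Geg m n t := by
  have h1 : (2 : ℝ) ≤ m := by exact_mod_cast hm
  have h2 : (0 : ℝ) ≤ n := Nat.cast_nonneg n
  have e1 : Geg m (n + 2) t = ((2 * (n : ℝ) + m + 1) * t * Geg m (n + 1) t
        - ((n : ℝ) + m - 1) * Geg m n t) / ((n : ℝ) + 2) := rfl
  rw [e1, gup, gdn]
  push_cast
  exact key_alg (n : ℝ) (m : ℝ) t _ _ (by linarith) (by linarith)

lemma geg_mul0 (m : ℕ) (hm : 2 ≤ m) (t : ℝ) :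
    t * Geg m 0 t = gup m 0 * Geg m 1 t := by
  have h1 : (2 : ℝ) ≤ m := by exact_mod_cast hm
  have hne : ((m : ℝ) - 1) ≠ 0 := by linarith
  show t * 1 = gup m 0 * (((m : ℝ) - 1) * t)
  rw [gup]
  push_cast
  field_simp
  rw [eq_div_iff (by simpa using hne)]
  ring

lemma geg_mul' (m N : ℕ) (hm : 2 ≤ m) (t : ℝ) :
    t * Geg m N t = gup m N * Geg m (N + 1) t
      + (if 1 ≤ N then gdn m N * Geg m (N - 1) t else 0) := by
  match N with
  | 0 => simpa using geg_mul0 m hm t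
  | n + 1 => simpa using geg_mul m n hm t

lemma gegenbauer_aux (m : ℕ) (hm : 2 ≤ m) (k : ℕ) : ∃ c : ℕ → ℝ, (∀ j ≤ k / 2, 0 < c j) ∧
    ∀ t : ℝ, t ^ k = ∑ j ∈ Finset.range (k / 2 + 1), c j * Geg m (k - 2 * j) t := by
  induction k with
  | zero =>
    exact ⟨fun _ => 1, fun j _ => one_pos, fun t => by simp [Geg]⟩
  | succ k ih =>
    obtain ⟨c, hpos, hc⟩ := ih
    refine ⟨fun j => (if j ≤ k / 2 then c j * gup m (k - 2 * j) else 0)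
        + (if 1 ≤ j ∧ 2 * j ≤ k + 1 then c (j - 1) * gdn m (k - 2 * (j - 1)) else 0),
        ?_, ?_⟩
    · intro j hj
      by_cases h1 : j ≤ k / 2
      · apply add_pos_of_pos_of_nonneg
        · simp only [h1, if_true]
          exact mul_pos (hpos j h1) (gup_pos m _ hm)
        · split
          · next h2 =>
            exact le_of_lt (mul_pos (hpos _ (by omega)) (gdn_pos m _ hm (by omega)))
          · exact le_refl 0
      · have h2 : 1 ≤ j ∧ 2 * j ≤ k + 1 := by omega
        apply add_pos_of_nonneg_of_pos
        · simp [h1]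
        · simp only [h2, and_self, if_true]
          exact mul_pos (hpos _ (by omega)) (gdn_pos m _ hm (by omega))
    · intro t
      have hstep : t ^ (k + 1) = t * t ^ k := by ring
      rw [hstep, hc t, Finset.mul_sum]
      have expand : ∀ j ∈ Finset.range (k / 2 + 1),
          t * (c j * Geg m (k - 2 * j) t)
            = c j * gup m (k - 2 * j) * Geg m (k + 1 - 2 * j) t
              + (if 2 * j < k then c j * gdn m (k - 2 * j) * Geg m (k - 2 * j - 1) t
                  else 0) := by
        intro j hj
        rw [Finset.mem_range] at hj
        have hjk : 2 * j ≤ k := by omega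
        have h := geg_mul' m (k - 2 * j) hm t
        rw [show k - 2 * j + 1 = k + 1 - 2 * j by omega] at h
        by_cases h3 : 2 * j < k
        · rw [if_pos (show 1 ≤ k - 2 * j by omega)] at h
          rw [if_pos h3]
          calc t * (c j * Geg m (k - 2 * j) t)
              = c j * (t * Geg m (k - 2 * j) t) := by ring
            _ = _ := by rw [h]; ring
        · rw [if_neg (show ¬ 1 ≤ k - 2 * j by omega)] at h
          rw [if_neg h3]
          calc t * (c j * Geg m (k - 2 * j) t)
              = c j * (t * Geg m (k - 2 * j) t) := by ring
            _ = _ := by rw [h]; ring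
      rw [Finset.sum_congr rfl expand, Finset.sum_add_distrib]
      have rhs_split : ∀ j ∈ Finset.range ((k + 1) / 2 + 1),
          ((if j ≤ k / 2 then c j * gup m (k - 2 * j) else 0)
            + (if 1 ≤ j ∧ 2 * j ≤ k + 1 then c (j - 1) * gdn m (k - 2 * (j - 1)) else 0))
            * Geg m (k + 1 - 2 * j) t
          = (if j ≤ k / 2 then c j * gup m (k - 2 * j) else 0) * Geg m (k + 1 - 2 * j) t
            + (if 1 ≤ j ∧ 2 * j ≤ k + 1 then c (j - 1) * gdn m (k - 2 * (j - 1)) else 0)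
              * Geg m (k + 1 - 2 * j) t := fun j _ => add_mul _ _ _
      rw [Finset.sum_congr rfl rhs_split, Finset.sum_add_distrib]
      congr 1
      · -- "up" sums agree
        have hsub : Finset.range (k / 2 + 1) ⊆ Finset.range ((k + 1) / 2 + 1) :=
          Finset.range_subset_range.mpr (by omega)
        rw [← Finset.sum_subset hsub (by
          intro x hx hx2
          simp only [Finset.mem_range] at hx hx2
          have hx3 : ¬ x ≤ k / 2 := by omega
          rw [if_neg hx3, zero_mul])]
        apply Finset.sum_congr rfl
        intro j hj
        rw [Finset.mem_range] at hj
        have hj2 : j ≤ k / 2 := by omega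
        rw [if_pos hj2]
      · -- "down" sums agree
        conv_rhs => rw [Finset.sum_range_succ']
        have h0 : ¬ (1 ≤ 0 ∧ 2 * 0 ≤ k + 1) := by omega
        rw [if_neg h0, zero_mul, add_zero]
        have hsub : Finset.range ((k + 1) / 2) ⊆ Finset.range (k / 2 + 1) :=
          Finset.range_subset_range.mpr (by omega)
        rw [← Finset.sum_subset hsub (by
          intro x hx hx2
          simp only [Finset.mem_range] at hx hx2
          have hx3 : ¬ 2 * x < k := by omega
          rw [if_neg hx3])]
        apply Finset.sum_congr rfl
        intro i hi
        rw [Finset.mem_range] at hi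
        have h1 : 2 * i < k := by omega
        have h2 : 1 ≤ i + 1 ∧ 2 * (i + 1) ≤ k + 1 := by omega
        rw [if_pos h1, if_pos h2, show i + 1 - 1 = i by omega,
          show k + 1 - 2 * (i + 1) = k - 2 * i - 1 by omega]

theorem monomial_eq_sum_gegenbauer (m k : ℕ) (hm : 2 ≤ m) :
    ∃ c : ℕ → ℝ, (∀ j ≤ k / 2, 0 < c j) ∧
      ∀ t ∈ Set.Icc (-1 : ℝ) 1,
        t ^ k = ∑ j ∈ Finset.range (k / 2 + 1), c j * Geg m (k - 2 * j) t := by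
  obtain ⟨c, hpos, hc⟩ := gegenbauer_aux m hm k
  exact ⟨c, hpos, fun t _ => hc t⟩
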